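/- Let η : [0,1] → A be continuous and let g : [0,1] → A be a based gauge transformation that is moreover a loop, i.e. g is C¹ with g(θ) invertible for every θ and g(0) = g(1) = 1. Then the holonomy is invariant under the gauge action: Hol_{g·η} = Hol_η, where (g·η)(θ) := g(θ)⁻¹ η(θ) g(θ) + g(θ)⁻¹ g'(θ). -/

import Mathlib

open Set

theorem linode_unique {A : Type*} [NormedRing A] [NormedAlgebra ℝ A]
    (B f h : ℝ → A) (hB : ContinuousOn B (Icc 0 1))
    (hf : ∀ θ ∈ Icc (0:ℝ) 1, HasDerivWithinAt f (-(B θ * f θ)) (Icc (0:ℝ) 1) θ)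
    (hh : ∀ θ ∈ Icc (0:ℝ) 1, HasDerivWithinAt h (-(B θ * h θ)) (Icc (0:ℝ) 1) θ)
    (h0 : f 0 = h 0) : EqOn f h (Icc 0 1) := by
  obtain ⟨C, hC⟩ := isCompact_Icc.exists_bound_of_continuousOn hB
  set v : ℝ → A → A := fun t x => -(B (↑(projIcc (0:ℝ) 1 zero_le_one t)) * x) with hv
  have hlip : ∀ t, LipschitzWith ⟨max C 0, le_max_right _ _⟩ (v t) := by
    intro t
    apply LipschitzWith.of_dist_le_mul
    intro x y
    set c := B (↑(projIcc (0:ℝ) 1 zero_le_one t)) with hc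
    have h1 : v t x - v t y = c * (y - x) := by
      show -(c * x) - -(c * y) = _
      rw [mul_sub]; abel
    rw [dist_eq_norm, dist_eq_norm, h1, ← norm_neg (x - y), neg_sub]
    calc ‖c * (y - x)‖ ≤ ‖c‖ * ‖y - x‖ := norm_mul_le _ _
      _ ≤ max C 0 * ‖y - x‖ := by
          gcongr
          exact le_max_of_le_left (hC _ (projIcc (0:ℝ) 1 zero_le_one t).2)
  have key : ∀ (F : ℝ → A), (∀ θ ∈ Icc (0:ℝ) 1, HasDerivWithinAt F (-(B θ * F θ)) (Icc (0:ℝ) 1) θ)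
      → ∀ t ∈ Ico (0:ℝ) 1, HasDerivWithinAt F (v t (F t)) (Ici t) t := by
    intro F hF t ht
    have : v t (F t) = -(B t * F t) := by
      show -(B (↑(projIcc (0:ℝ) 1 zero_le_one t)) * F t) = _
      rw [projIcc_of_mem zero_le_one (mem_Icc_of_Ico ht)]
    rw [this]
    exact (hF t (mem_Icc_of_Ico ht)).mono_of_mem_nhdsWithin (Icc_mem_nhdsGE_of_mem ht)
  exact ODE_solution_unique hlip
    (fun t ht => (hf t ht).continuousWithinAt) (key f hf)
    (fun t ht => (hh t ht).continuousWithinAt) (key h hh) h0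

/-- The holonomy is invariant under based loops of gauge transformations: if `g` is C¹,
pointwise invertible and `g(0) = g(1) = 1`, then `Hol_{g·η} = Hol_η`. -/
theorem stmt_3 {A : Type*} [NormedRing A] [NormedAlgebra ℝ A] [NormOneClass A]
    [CompleteSpace A] (η Ψ g Dg Ψ' : ℝ → A) (hη : ContinuousOn η (Icc 0 1))
    -- Ψ is the horizontal path of η, so that Hol_η = Ψ 1
    (hΨ : ∀ θ ∈ Icc (0:ℝ) 1, HasDerivWithinAt Ψ (-(η θ * Ψ θ)) (Icc (0:ℝ) 1) θ)
    (hΨ0 : Ψ 0 = 1)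
    -- g is a based loop of gauge transformations with derivative Dg
    (hg : ∀ θ ∈ Icc (0:ℝ) 1, HasDerivWithinAt g (Dg θ) (Icc (0:ℝ) 1) θ)
    (hDg : ContinuousOn Dg (Icc 0 1))
    (hginv : ∀ θ ∈ Icc (0:ℝ) 1, IsUnit (g θ))
    (hg0 : g 0 = 1) (hg1 : g 1 = 1)
    -- Ψ' is the horizontal path of the gauge-transformed connection g·η, so Hol_{g·η} = Ψ' 1
    (hΨ' : ∀ θ ∈ Icc (0:ℝ) 1, HasDerivWithinAt Ψ'
      (-((Ring.inverse (g θ) * η θ * g θ + Ring.inverse (g θ) * Dg θ) * Ψ' θ))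
      (Icc (0:ℝ) 1) θ)
    (hΨ'0 : Ψ' 0 = 1) :
    Ψ' 1 = Ψ 1 := by
  set B : ℝ → A := fun θ => Ring.inverse (g θ) * η θ * g θ + Ring.inverse (g θ) * Dg θ with hB
  set Φ : ℝ → A := fun θ => Ring.inverse (g θ) * Ψ θ with hΦ
  -- derivative of the pointwise inverse of g
  have hinv : ∀ θ ∈ Icc (0:ℝ) 1, HasDerivWithinAt (fun θ => Ring.inverse (g θ))
      (-(Ring.inverse (g θ) * Dg θ * Ring.inverse (g θ))) (Icc (0:ℝ) 1) θ := by
    intro θ hθ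
    set u := (hginv θ hθ).unit with hu
    have hgu : g θ = ↑u := (hginv θ hθ).unit_spec.symm
    have hfd : HasFDerivAt Ring.inverse
        (-(ContinuousLinearMap.mulLeftRight ℝ A ↑u⁻¹ ↑u⁻¹)) (g θ) :=
      hgu ▸ hasFDerivAt_ringInverse (𝕜 := ℝ) u
    have := hfd.comp_hasDerivWithinAt θ (hg θ hθ)
    simpa [Function.comp_def, hgu, Ring.inverse_unit] using this
  have hcinv : ContinuousOn (fun θ => Ring.inverse (g θ)) (Icc 0 1) :=
    fun θ hθ => (hinv θ hθ).continuousWithinAt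
  have hgcont : ContinuousOn g (Icc 0 1) := fun θ hθ => (hg θ hθ).continuousWithinAt
  have hBcont : ContinuousOn B (Icc 0 1) := ((hcinv.mul hη).mul hgcont).add (hcinv.mul hDg)
  -- Φ solves the transformed ODE
  have hΦderiv : ∀ θ ∈ Icc (0:ℝ) 1, HasDerivWithinAt Φ (-(B θ * Φ θ)) (Icc (0:ℝ) 1) θ := by
    intro θ hθ
    have h := (hinv θ hθ).mul (hΨ θ hθ)
    convert h using 1
    · rfl
    set c := Ring.inverse (g θ) with hc
    have hc1 : g θ * c = 1 := Ring.mul_inverse_cancel _ (hginv θ hθ)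
    have hgc : g θ * (c * Ψ θ) = Ψ θ := by rw [← mul_assoc, hc1, one_mul]
    show -((c * η θ * g θ + c * Dg θ) * (c * Ψ θ)) = -(c * Dg θ * c) * Ψ θ + c * -(η θ * Ψ θ)
    simp only [add_mul, mul_assoc, hgc, mul_neg, neg_mul, neg_add]
    abel
  have heq := linode_unique B Ψ' Φ hBcont hΨ' hΦderiv (by simp [hΦ, hΨ'0, hΨ0, hg0])
  have := heq (right_mem_Icc.mpr zero_le_one)
  simpa [hΦ, hg1] using this
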